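/- There exists a C^∞ function f : ℝ → ℝ with f(t) ≥ 0 for all t such that for every α ∈ (0, 1] there is no differentiable function g : ℝ → ℝ with g(t)² = f(t) for all t whose derivative g' is locally α-Hölder continuous. In other words, a C^∞ curve in the orbit space of the representation of ℤ/2ℤ on ℝ by x ↦ -x does in general not admit a lift of class C^{1,α} for any α > 0. -/

import Mathlib

open Filter Set Metric Function Topology

noncomputable section NoLift

def bmp : ContDiffBump (0:ℝ) := ⟨1, 2, one_pos, one_lt_two⟩

def phi : ℝ → ℝ := fun x => bmp x

lemma phi_contDiff : ContDiff ℝ (⊤:ℕ∞) phi := bmp.contDiff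

lemma phi_nonneg (x : ℝ) : 0 ≤ phi x := bmp.nonneg

lemma phi_one {x : ℝ} (h : |x| ≤ 1) : phi x = 1 :=
  bmp.one_of_mem_closedBall (by simpa [Real.dist_eq, bmp] using h)

lemma phi_zero {x : ℝ} (h : 2 ≤ |x|) : phi x = 0 := by
  have hx : x ∉ Function.support phi := by
    rw [show Function.support phi = Metric.ball 0 2 from bmp.support_eq]
    simp only [Metric.mem_ball, Real.dist_eq, sub_zero, not_lt]
    exact h
  simpa [Function.mem_support, not_not] using hx

lemma phi_hcs : HasCompactSupport phi := bmp.hasCompactSupport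

def FF : ℝ → ℝ → ℝ := fun e x => x^2 * phi x + e^2 * phi x

lemma FF_contDiff (e : ℝ) : ContDiff ℝ (⊤:ℕ∞) (FF e) :=
  (((contDiff_id.pow 2).mul phi_contDiff).add (contDiff_const.mul phi_contDiff))

lemma FF_nonneg (e x : ℝ) : 0 ≤ FF e x := by
  have h := phi_nonneg x
  have h1 : 0 ≤ x^2 * phi x := mul_nonneg (sq_nonneg x) h
  have h2 : 0 ≤ e^2 * phi x := mul_nonneg (sq_nonneg e) h
  simpa [FF] using add_nonneg h1 h2

lemma FF_bound (k : ℕ) : ∃ B : ℝ, 0 ≤ B ∧ ∀ (e x : ℝ), |e| ≤ 1 →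
    ‖iteratedFDeriv ℝ k (FF e) x‖ ≤ B := by
  have hG : ContDiff ℝ (⊤:ℕ∞) (fun x : ℝ => x^2 * phi x) := (contDiff_id.pow 2).mul phi_contDiff
  have hGcs : HasCompactSupport (fun x : ℝ => x^2 * phi x) :=
    HasCompactSupport.mul_left (f := fun x : ℝ => x^2) phi_hcs
  obtain ⟨B1, hB1⟩ := (hG.continuous_iteratedFDeriv (m := k) (by exact_mod_cast le_top)
    ).bounded_above_of_compact_support (hGcs.iteratedFDeriv k)
  obtain ⟨B2, hB2⟩ := (phi_contDiff.continuous_iteratedFDeriv (m := k) (by exact_mod_cast le_top)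
    ).bounded_above_of_compact_support (phi_hcs.iteratedFDeriv k)
  refine ⟨|B1| + |B2|, by positivity, fun e x he => ?_⟩
  have hF : FF e = (fun x : ℝ => x^2 * phi x) + (e^2) • phi := by
    funext y; simp [FF, Pi.add_apply, Pi.smul_apply, smul_eq_mul]
  have hck : ContDiff ℝ (k:ℕ∞) (fun x : ℝ => x^2 * phi x) := hG.of_le (by exact_mod_cast le_top)
  have hck2 : ContDiff ℝ (k:ℕ∞) phi := phi_contDiff.of_le (by exact_mod_cast le_top)
  have hsm : ContDiff ℝ (k:ℕ∞) ((e^2) • phi) := by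
    have := hck2.const_smul (e^2); exact this
  rw [hF, iteratedFDeriv_add_apply hck.contDiffAt hsm.contDiffAt]
  have h2 : ‖iteratedFDeriv ℝ k ((e^2) • phi) x‖ ≤ |B2| := by
    rw [iteratedFDeriv_const_smul_apply hck2.contDiffAt,
      norm_smul (e^2) (iteratedFDeriv ℝ k phi x)]
    have h1 : ‖(e^2 : ℝ)‖ ≤ 1 := by
      rw [Real.norm_eq_abs, abs_pow]
      calc |e|^2 ≤ 1^2 := pow_le_pow_left₀ (abs_nonneg e) he 2
      _ = 1 := one_pow 2
    calc ‖(e^2:ℝ)‖ * ‖iteratedFDeriv ℝ k phi x‖ ≤ 1 * |B2| :=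
          mul_le_mul h1 ((hB2 x).trans (le_abs_self _)) (norm_nonneg _) zero_le_one
      _ = |B2| := one_mul _
  calc ‖iteratedFDeriv ℝ k (fun x : ℝ => x^2 * phi x) x + iteratedFDeriv ℝ k ((e^2) • phi) x‖
      ≤ ‖iteratedFDeriv ℝ k (fun x : ℝ => x^2 * phi x) x‖ + ‖iteratedFDeriv ℝ k ((e^2) • phi) x‖ :=
        norm_add_le _ _
    _ ≤ |B1| + |B2| := add_le_add ((hB1 x).trans (le_abs_self _)) h2

def cc (n : ℕ) : ℝ := (1/2:ℝ)^n
def ww (n : ℕ) : ℝ := (1/2:ℝ)^n / 16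
def aa (n : ℕ) : ℝ := (1/2:ℝ)^(n*n)
def ee (n : ℕ) : ℝ := (1/2:ℝ)^(n*n*n)

def bump (n : ℕ) : ℝ → ℝ := fun t => (aa n)^2 * FF (ee n) ((t - cc n)/ww n)

def ff : ℝ → ℝ := fun t => ∑' n, bump n t

lemma ww_pos (n : ℕ) : 0 < ww n := by rw [ww]; positivity
lemma cc_pos (n : ℕ) : 0 < cc n := by rw [cc]; positivity
lemma aa_pos (n : ℕ) : 0 < aa n := by rw [aa]; positivity
lemma ee_pos (n : ℕ) : 0 < ee n := by rw [ee]; positivity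
lemma ee_le_one (n : ℕ) : ee n ≤ 1 := by
  rw [ee]; exact pow_le_one₀ (by norm_num) (by norm_num)

lemma bump_contDiff (n : ℕ) : ContDiff ℝ (⊤:ℕ∞) (bump n) := by
  apply contDiff_const.mul
  exact (FF_contDiff (ee n)).comp ((contDiff_id.sub contDiff_const).div_const (ww n))

lemma bump_nonneg (n : ℕ) (t : ℝ) : 0 ≤ bump n t :=
  mul_nonneg (sq_nonneg _) (FF_nonneg _ _)

lemma bump_eq (n : ℕ) :
    bump n = fun z => (aa n)^2 * FF (ee n) ((ww n)⁻¹ * (z + -(cc n))) := by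
  funext z
  rw [bump]
  congr 2
  rw [div_eq_inv_mul, sub_eq_add_neg]

lemma bump_iteratedDeriv (k n : ℕ) (x : ℝ) :
    iteratedDeriv k (bump n) x
      = ((ww n)⁻¹)^k * ((aa n)^2 *
          iteratedDeriv k (FF (ee n)) ((ww n)⁻¹ * (x + -(cc n)))) := by
  have hFk : ContDiff ℝ (k:ℕ∞) (FF (ee n)) := (FF_contDiff _).of_le (by exact_mod_cast le_top)
  have hF2 : ContDiff ℝ (k:ℕ∞) (fun u : ℝ => (aa n)^2 * FF (ee n) u) := contDiff_const.mul hFk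
  have hmul := iteratedDeriv_comp_const_mul hF2 ((ww n)⁻¹)
  have hadd := iteratedDeriv_comp_add_const k
    (fun y : ℝ => (aa n)^2 * FF (ee n) ((ww n)⁻¹ * y)) (-(cc n))
  have hconst : ∀ u : ℝ, iteratedDeriv k (fun u : ℝ => (aa n)^2 * FF (ee n) u) u
      = (aa n)^2 * iteratedDeriv k (FF (ee n)) u := by
    intro u
    rw [← iteratedDerivWithin_univ, ← iteratedDerivWithin_univ]
    exact iteratedDerivWithin_const_mul (Set.mem_univ u) uniqueDiffOn_univ ((aa n)^2)
      hFk.contDiffAt.contDiffWithinAt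
  rw [bump_eq]
  calc iteratedDeriv k (fun z => (aa n)^2 * FF (ee n) ((ww n)⁻¹ * (z + -(cc n)))) x
      = iteratedDeriv k (fun y : ℝ => (aa n)^2 * FF (ee n) ((ww n)⁻¹ * y)) (x + -(cc n)) :=
        congrFun hadd x
    _ = ((ww n)⁻¹)^k * iteratedDeriv k (fun u : ℝ => (aa n)^2 * FF (ee n) u)
          ((ww n)⁻¹ * (x + -(cc n))) := congrFun hmul _
    _ = _ := by rw [hconst]

lemma bump_fd_bound (k n : ℕ) (x : ℝ) {B : ℝ} (hB : ∀ (e y : ℝ), |e| ≤ 1 →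
    ‖iteratedFDeriv ℝ k (FF e) y‖ ≤ B) :
    ‖iteratedFDeriv ℝ k (bump n) x‖ ≤ B * ((aa n)^2 * ((ww n)⁻¹)^k) := by
  rw [norm_iteratedFDeriv_eq_norm_iteratedDeriv, bump_iteratedDeriv, Real.norm_eq_abs]
  have he : |ee n| ≤ 1 := by
    rw [abs_of_nonneg (ee_pos n).le]; exact ee_le_one n
  have hb := hB (ee n) ((ww n)⁻¹ * (x + -(cc n))) he
  rw [norm_iteratedFDeriv_eq_norm_iteratedDeriv, Real.norm_eq_abs] at hb
  have h0B : (0:ℝ) ≤ B := le_trans (abs_nonneg _) hb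
  rw [abs_mul, abs_mul, abs_pow, abs_of_nonneg (inv_nonneg.mpr (ww_pos n).le),
    abs_of_nonneg (sq_nonneg (aa n))]
  calc ((ww n)⁻¹)^k * ((aa n)^2 * |iteratedDeriv k (FF (ee n)) ((ww n)⁻¹ * (x + -(cc n)))|)
      ≤ ((ww n)⁻¹)^k * ((aa n)^2 * B) := by
        apply mul_le_mul_of_nonneg_left _ (pow_nonneg (inv_nonneg.mpr (ww_pos n).le) k)
        exact mul_le_mul_of_nonneg_left hb (sq_nonneg _)
    _ = B * ((aa n)^2 * ((ww n)⁻¹)^k) := by ring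

lemma winv (n : ℕ) : (ww n)⁻¹ = 16 * 2^n := by
  rw [ww]
  rw [one_div, inv_pow]
  field_simp

lemma summand_le (k n : ℕ) :
    (aa n)^2 * ((ww n)⁻¹)^k ≤ 16^k * 2^((k+1)*(k+1)) * (1/2:ℝ)^n := by
  have hexp : n*k + n ≤ (k+1)*(k+1) + 2*(n*n) := by
    rcases le_total n (k+1) with h|h
    · calc n*k + n = n*(k+1) := by ring
        _ ≤ (k+1)*(k+1) := Nat.mul_le_mul_right _ h
        _ ≤ _ := Nat.le_add_right _ _
    · calc n*k + n = n*(k+1) := by ring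
        _ ≤ n*n := Nat.mul_le_mul_left _ h
        _ ≤ 2*(n*n) := by omega
        _ ≤ _ := Nat.le_add_left _ _
  have h2 : (16:ℝ)^k * 2^(n*k) * 2^n ≤ 16^k * 2^((k+1)*(k+1)) * 2^(2*(n*n)) := by
    have hp : (2:ℝ)^(n*k + n) ≤ 2^((k+1)*(k+1) + 2*(n*n)) :=
      pow_le_pow_right₀ one_le_two hexp
    calc (16:ℝ)^k * 2^(n*k) * 2^n = 16^k * 2^(n*k+n) := by rw [pow_add]; ring
      _ ≤ 16^k * 2^((k+1)*(k+1) + 2*(n*n)) :=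
          mul_le_mul_of_nonneg_left hp (by positivity)
      _ = 16^k * 2^((k+1)*(k+1)) * 2^(2*(n*n)) := by rw [pow_add]; ring
  have e1 : (aa n)^2 = ((2:ℝ)^(2*(n*n)))⁻¹ := by
    rw [aa, ← pow_mul', one_div, inv_pow]
  have e2 : ((ww n)⁻¹)^k = (16:ℝ)^k * 2^(n*k) := by
    rw [winv, mul_pow, ← pow_mul]
  have e3 : (1/2:ℝ)^n = ((2:ℝ)^n)⁻¹ := by rw [one_div, inv_pow]
  rw [e1, e2, e3, inv_mul_eq_div, ← div_eq_mul_inv,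
    div_le_div_iff₀ (by positivity) (by positivity)]
  calc (16:ℝ)^k * 2^(n*k) * 2^n ≤ 16^k * 2^((k+1)*(k+1)) * 2^(2*(n*n)) := h2
    _ = 16 ^ k * 2 ^ ((k + 1) * (k + 1)) * 2 ^ (2 * (n * n)) := by ring

lemma summable_v (k : ℕ) (B : ℝ) (hB : 0 ≤ B) :
    Summable (fun n => B * ((aa n)^2 * ((ww n)⁻¹)^k)) := by
  refine Summable.of_nonneg_of_le (fun n => ?_) (fun n => ?_)
    ((summable_geometric_of_lt_one (by norm_num) (by norm_num) :
        Summable fun n : ℕ => (1/2:ℝ)^n).mul_left (B * (16^k * 2^((k+1)*(k+1)))))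
  · have h1 := sq_nonneg (aa n)
    have h2 : (0:ℝ) ≤ ((ww n)⁻¹)^k := pow_nonneg (inv_nonneg.mpr (ww_pos n).le) k
    positivity
  · calc B * ((aa n)^2 * ((ww n)⁻¹)^k)
        ≤ B * (16^k * 2^((k+1)*(k+1)) * (1/2:ℝ)^n) :=
          mul_le_mul_of_nonneg_left (summand_le k n) hB
      _ = (B * (16^k * 2^((k+1)*(k+1)))) * (1/2:ℝ)^n := by ring

lemma ff_contDiff : ContDiff ℝ (⊤:ℕ∞) ff := by
  have hch : ∀ k : ℕ, ∃ B : ℝ, 0 ≤ B ∧ ∀ (e x : ℝ), |e| ≤ 1 →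
      ‖iteratedFDeriv ℝ k (FF e) x‖ ≤ B := FF_bound
  choose B hB0 hB using hch
  apply contDiff_tsum (v := fun k n => B k * ((aa n)^2 * ((ww n)⁻¹)^k))
    (fun n => bump_contDiff n)
  · intro k _
    exact summable_v k (B k) (hB0 k)
  · intro k n x _
    exact bump_fd_bound k n x (hB k)

lemma ff_nonneg (t : ℝ) : 0 ≤ ff t := tsum_nonneg (fun n => bump_nonneg n t)

lemma bump_zero_of (m : ℕ) {x : ℝ} (h : 2 * ww m ≤ |x - cc m|) : bump m x = 0 := by
  have h2 : (2:ℝ) ≤ |(x - cc m)/ww m| := by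
    rw [abs_div, abs_of_pos (ww_pos m), le_div_iff₀ (ww_pos m)]; linarith
  rw [bump, FF, phi_zero h2]; ring

lemma cc_anti {m n : ℕ} (h : m + 1 ≤ n) : cc n ≤ cc m / 2 := by
  have h1 : (1/2:ℝ)^n ≤ (1/2)^(m+1) :=
    pow_le_pow_of_le_one (by norm_num) (by norm_num) h
  have h2 : ((1/2:ℝ))^(m+1) = (1/2)^m/2 := by rw [pow_succ]; ring
  rw [cc, cc]; rw [h2] at h1; exact h1

lemma ww_eq (n : ℕ) : ww n = cc n / 16 := by rw [ww, cc]

lemma bump_other_zero {n m : ℕ} (hmn : m ≠ n) {x : ℝ} (hx : |x - cc n| < ww n) :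
    bump m x = 0 := by
  apply bump_zero_of
  obtain ⟨hx1, hx2⟩ := abs_lt.mp hx
  have hwn := ww_eq n
  have hwm := ww_eq m
  have hcn := cc_pos n
  have hcm := cc_pos m
  rcases lt_or_gt_of_ne hmn with h|h
  · -- m < n : bump m is to the right of x
    have hc := cc_anti (show m+1 ≤ n by omega)
    refine le_abs.mpr (Or.inr ?_)
    nlinarith
  · -- m > n : bump m is to the left of x
    have hc := cc_anti (show n+1 ≤ m by omega)
    refine le_abs.mpr (Or.inl ?_)
    nlinarith

lemma ff_eq_local {n : ℕ} {x : ℝ} (hx : |x - cc n| < ww n) :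
    ff x = (aa n)^2/(ww n)^2 * (x - cc n)^2 + (aa n)^2 * (ee n)^2 := by
  have h1 : ff x = bump n x := tsum_eq_single n (fun m hm => bump_other_zero hm hx)
  have hφ : phi ((x - cc n)/ww n) = 1 := phi_one (by
    rw [abs_div, abs_of_pos (ww_pos n), div_le_one (ww_pos n)]; linarith)
  rw [h1, bump, FF, hφ]
  have hw0 : ww n ≠ 0 := (ww_pos n).ne'
  field_simp

end NoLift

set_option maxHeartbeats 2000000 in
/-- There is a nonnegative `C^∞`-function `f : ℝ → ℝ` (a smooth curve in the orbit space of
the representation of `ℤ/2` on `ℝ` by `x ↦ -x`) which, for every `α ∈ (0,1]`, admits no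
differentiable square root `g` (i.e. `g ^ 2 = f`) whose derivative is locally `α`-Hölder
continuous; that is, `f` admits no lift of class `C^{1,α}` for any `α > 0`. -/
theorem no_C1alpha_lift :
    ∃ f : ℝ → ℝ, ContDiff ℝ (⊤ : ℕ∞) f ∧ (∀ t, 0 ≤ f t) ∧
      ∀ α : ℝ, 0 < α → α ≤ 1 →
        ¬ ∃ g : ℝ → ℝ, Differentiable ℝ g ∧ (∀ t, g t ^ 2 = f t) ∧
          ∀ K : Set ℝ, IsCompact K → ∃ C : ℝ, ∀ s ∈ K, ∀ t ∈ K,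
            |deriv g s - deriv g t| ≤ C * |s - t| ^ α := by
  refine ⟨ff, ff_contDiff, ff_nonneg, ?_⟩
  intro α hα0 hα1 hcon
  obtain ⟨g, hgdiff, hgsq, hHol⟩ := hcon
  obtain ⟨C, hC⟩ := hHol (Set.Icc 0 2) isCompact_Icc
  obtain ⟨N, hn0⟩ := exists_nat_gt (max (max (2/α) (2*C + 1)) 1)
  have hmax : max (2/α) (2*C+1) < (N:ℝ) := lt_of_le_of_lt (le_max_left _ _) hn0
  have hNR : (1:ℝ) ≤ (N:ℝ) := le_of_lt (lt_of_le_of_lt (le_max_right _ _) hn0)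
  have hN1 : 1 ≤ N := by exact_mod_cast hNR
  have hNα : 2/α < (N:ℝ) := lt_of_le_of_lt (le_max_left _ _) hmax
  have hNC : 2*C + 1 < (N:ℝ) := lt_of_le_of_lt (le_max_right _ _) hmax
  have hw := ww_pos N
  have ha := aa_pos N
  have he := ee_pos N
  have hcp := cc_pos N
  have hpow1 : (1/2:ℝ)^N ≤ 1 := pow_le_one₀ (by norm_num) (by norm_num)
  have hwle : ww N ≤ 1 := by rw [ww]; linarith
  have hcle : cc N ≤ 1 := by rw [cc]; linarith
  have helt : ee N < 1 := by
    rw [ee]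
    apply pow_lt_one₀ (by norm_num) (by norm_num)
    have : 1 ≤ N*N*N := Nat.one_le_iff_ne_zero.mpr (by positivity)
    omega
  set s := cc N + ee N * ww N with hs_def
  set t := cc N - ee N * ww N with ht_def
  have hεw : 0 < ee N * ww N := mul_pos he hw
  have hεwlt : ee N * ww N < ww N := by
    have := mul_lt_of_lt_one_left hw helt
    linarith
  have hsc : |s - cc N| < ww N := by
    have h1 : s - cc N = ee N * ww N := by rw [hs_def]; ring
    rw [h1, abs_of_pos hεw]; exact hεwlt
  have htc : |t - cc N| < ww N := by
    have h1 : t - cc N = -(ee N * ww N) := by rw [ht_def]; ring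
    rw [h1, abs_neg, abs_of_pos hεw]; exact hεwlt
  have hq_pos : ∀ x : ℝ, 0 < (aa N)^2/(ww N)^2 * (x - cc N)^2 + (aa N)^2 * (ee N)^2 := by
    intro x
    have h1 : (0:ℝ) ≤ (aa N)^2/(ww N)^2 * (x - cc N)^2 := by positivity
    have h2 : (0:ℝ) < (aa N)^2 * (ee N)^2 := mul_pos (pow_pos ha 2) (pow_pos he 2)
    linarith
  have hgq : ∀ x : ℝ, |x - cc N| < ww N →
      g x ^ 2 = (aa N)^2/(ww N)^2 * (x - cc N)^2 + (aa N)^2 * (ee N)^2 := by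
    intro x hx; rw [hgsq x]; exact ff_eq_local hx
  have hgne : ∀ x : ℝ, |x - cc N| < ww N → g x ≠ 0 := by
    intro x hx hx0
    have h1 := hgq x hx
    rw [hx0] at h1
    simp only [ne_eq, OfNat.ofNat_ne_zero, not_false_eq_true, zero_pow] at h1
    exact absurd h1.symm (ne_of_gt (hq_pos x))
  have hkey : ∀ x : ℝ, |x - cc N| < ww N →
      2 * g x * deriv g x = (aa N)^2/(ww N)^2 * (2*(x - cc N)) := by
    intro x hx
    have hball : Metric.ball (cc N) (ww N) ∈ 𝓝 x :=
      Metric.isOpen_ball.mem_nhds (by rw [Metric.mem_ball, Real.dist_eq]; exact hx)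
    have hev : (fun y => g y ^ 2) =ᶠ[𝓝 x]
        (fun y => (aa N)^2/(ww N)^2 * (y - cc N)^2 + (aa N)^2 * (ee N)^2) := by
      filter_upwards [hball] with y hy
      rw [hgsq y]
      exact ff_eq_local (by rw [Metric.mem_ball, Real.dist_eq] at hy; exact hy)
    have h2 : HasDerivAt (fun y => g y ^ 2) (2 * g x ^ 1 * deriv g x) x := by
      simpa using (hgdiff x).hasDerivAt.fun_pow 2
    have h3 : HasDerivAt (fun y => (aa N)^2/(ww N)^2 * (y - cc N)^2 + (aa N)^2 * (ee N)^2)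
        ((aa N)^2/(ww N)^2 * (2*(x - cc N))) x := by
      have hbase : HasDerivAt (fun y : ℝ => (y - cc N)^2) ((2:ℕ)*(x - cc N)^1*1) x :=
        ((hasDerivAt_id x).sub_const (cc N)).pow 2
      have h4 := (hbase.const_mul ((aa N)^2/(ww N)^2)).add_const ((aa N)^2 * (ee N)^2)
      refine h4.congr_deriv ?_
      push_cast
      ring
    have hde := hev.deriv_eq
    rw [h2.deriv, h3.deriv] at hde
    calc 2 * g x * deriv g x = 2 * g x ^ 1 * deriv g x := by ring
      _ = _ := hde
  have hts : t ≤ s := by rw [hs_def, ht_def]; linarith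
  have hw0 : ww N ≠ 0 := hw.ne'
  have hqs : g s ^2 = 2*(aa N)^2*(ee N)^2 := by
    rw [hgq s hsc]
    have h1 : s - cc N = ee N * ww N := by rw [hs_def]; ring
    rw [h1]
    field_simp
    ring
  have hqt : g t ^2 = 2*(aa N)^2*(ee N)^2 := by
    rw [hgq t htc]
    have h1 : t - cc N = -(ee N * ww N) := by rw [ht_def]; ring
    rw [h1]
    field_simp
    ring
  have hgts : g t = g s := by
    by_contra hne
    have hfac : (g t - g s) * (g t + g s) = 0 := by
      linear_combination hqt - hqs
    rcases mul_eq_zero.mp hfac with h|h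
    · exact hne (by linarith)
    · have hgt : g t = -g s := by linarith
      have hs0 : g s ≠ 0 := hgne s hsc
      have h0mem : (0:ℝ) ∈ Set.uIcc (g t) (g s) := by
        rcases lt_or_gt_of_ne hs0 with h'|h'
        · exact Set.mem_uIcc.mpr (Or.inr ⟨h'.le, by rw [hgt]; linarith⟩)
        · exact Set.mem_uIcc.mpr (Or.inl ⟨by rw [hgt]; linarith, h'.le⟩)
      obtain ⟨x, hxmem, hgx0⟩ :=
        intermediate_value_uIcc (hgdiff.continuous.continuousOn) h0mem
      rw [Set.uIcc_of_le hts] at hxmem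
      obtain ⟨hx1, hx2⟩ := hxmem
      have hxc : |x - cc N| < ww N := by
        rw [abs_lt]
        constructor
        · rw [ht_def] at hx1; linarith
        · rw [hs_def] at hx2; linarith
      exact hgne x hxc hgx0
  have es := hkey s hsc
  have et := hkey t htc
  rw [hgts] at et
  have h1s : s - cc N = ee N * ww N := by rw [hs_def]; ring
  have h1t : t - cc N = -(ee N * ww N) := by rw [ht_def]; ring
  rw [h1s] at es
  rw [h1t] at et
  have hΔ : 2 * g s * (deriv g s - deriv g t)
      = (aa N)^2/(ww N)^2 * (4*(ee N * ww N)) := by linear_combination es - et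
  have habs : 2 * |g s| * |deriv g s - deriv g t|
      = (aa N)^2/(ww N)^2 * (4*(ee N * ww N)) := by
    have h2 := congrArg abs hΔ
    rw [abs_mul, abs_mul, abs_two,
      abs_of_nonneg (show (0:ℝ) ≤ (aa N)^2/(ww N)^2 * (4*(ee N * ww N)) by positivity)] at h2
    exact h2
  have hgs_le : |g s| ≤ 2 * aa N * ee N := by
    have h2 : |g s| = Real.sqrt (g s ^2) := (Real.sqrt_sq_eq_abs _).symm
    rw [h2, hqs]
    have hsq : 2*(aa N)^2*(ee N)^2 ≤ (2*aa N*ee N)^2 := by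
      have h9 : (0:ℝ) < (aa N)^2*(ee N)^2 := mul_pos (pow_pos ha 2) (pow_pos he 2)
      have hexpand : (2*aa N*ee N)^2 = 4*((aa N)^2*(ee N)^2) := by ring
      rw [hexpand]; linarith
    calc Real.sqrt (2*(aa N)^2*(ee N)^2) ≤ Real.sqrt ((2*aa N*ee N)^2) :=
          Real.sqrt_le_sqrt hsq
      _ = |2*aa N*ee N| := Real.sqrt_sq_eq_abs _
      _ = 2*aa N*ee N := abs_of_pos (by positivity)
  have hD0 : (0:ℝ) ≤ |deriv g s - deriv g t| := abs_nonneg _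
  have hval : 2*|g s| * |deriv g s - deriv g t| = 4*(aa N)^2*(ee N)/(ww N) := by
    rw [habs]; field_simp
  have hstep : 4*(aa N)^2*(ee N)/(ww N) ≤ 4*(aa N)*(ee N)*|deriv g s - deriv g t| := by
    rw [← hval]
    have h22 : 2*|g s| ≤ 4*(aa N)*(ee N) := by linarith [hgs_le]
    calc 2*|g s| * |deriv g s - deriv g t|
        ≤ (4*(aa N)*(ee N)) * |deriv g s - deriv g t| :=
          mul_le_mul_of_nonneg_right h22 hD0
      _ = 4*(aa N)*(ee N)*|deriv g s - deriv g t| := by ring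
  have hstep' : 4*(aa N)^2*(ee N) ≤ 4*(aa N)*(ee N)*|deriv g s - deriv g t| * (ww N) := by
    rw [div_le_iff₀ hw] at hstep
    linarith
  have hlow : aa N ≤ |deriv g s - deriv g t| * ww N := by
    have h4ae : (0:ℝ) < 4*(aa N)*(ee N) := by positivity
    have hgoal : (4*(aa N)*(ee N)) * aa N
        ≤ (4*(aa N)*(ee N)) * (|deriv g s - deriv g t| * ww N) := by
      calc (4*(aa N)*(ee N)) * aa N = 4*(aa N)^2*(ee N) := by ring
        _ ≤ 4*(aa N)*(ee N)*|deriv g s - deriv g t| * (ww N) := hstep'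
        _ = (4*(aa N)*(ee N)) * (|deriv g s - deriv g t| * ww N) := by ring
    exact le_of_mul_le_mul_left hgoal h4ae
  have hlow2 : aa N ≤ |deriv g s - deriv g t| := by
    refine le_trans hlow ?_
    calc |deriv g s - deriv g t| * ww N ≤ |deriv g s - deriv g t| * 1 :=
          mul_le_mul_of_nonneg_left hwle hD0
      _ = |deriv g s - deriv g t| := mul_one _
  have hsmem : s ∈ Set.Icc (0:ℝ) 2 := by
    constructor
    · rw [hs_def]; linarith [hεw]
    · rw [hs_def]; linarith [hεwlt, hwle, hcle]
  have hwc : ww N = cc N/16 := ww_eq N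
  have htmem : t ∈ Set.Icc (0:ℝ) 2 := by
    constructor
    · rw [ht_def]; linarith [hεwlt, hwc, hcp]
    · rw [ht_def]; linarith [hεw, hcle]
  have hH := hC s hsmem t htmem
  have hst : |s - t| = 2*(ee N * ww N) := by
    have h1 : s - t = 2*(ee N * ww N) := by rw [hs_def, ht_def]; ring
    rw [h1, abs_of_pos (by positivity)]
  rw [hst] at hH
  have hup : aa N ≤ C * (2*(ee N * ww N))^α := le_trans hlow2 hH
  have hrp : (0:ℝ) < (2*(ee N * ww N))^α := Real.rpow_pos_of_pos (by positivity) α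
  have hCpos : 0 < C := by
    by_contra hc
    push_neg at hc
    have h0 : C * (2*(ee N * ww N))^α ≤ 0 := mul_nonpos_of_nonpos_of_nonneg hc hrp.le
    linarith
  have h1 : (2*(ee N * ww N))^α ≤ (2*ee N)^α := by
    have hb : ee N * ww N ≤ ee N := by
      have := mul_le_mul_of_nonneg_left hwle he.le
      simpa using this
    exact Real.rpow_le_rpow (by positivity) (by linarith) hα0.le
  have h2 : (2*ee N)^α = 2^α * (ee N)^α := Real.mul_rpow (by norm_num) he.le
  have h3 : (2:ℝ)^α ≤ 2 := by
    calc (2:ℝ)^α ≤ (2:ℝ)^(1:ℝ) := Real.rpow_le_rpow_of_exponent_le one_le_two hα1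
      _ = 2 := Real.rpow_one 2
  have h4 : (ee N)^α ≤ (aa N)^2 := by
    rw [ee, aa, ← pow_mul, ← Real.rpow_natCast (1/2:ℝ) (N*N*N),
      ← Real.rpow_natCast (1/2:ℝ) (N*N*2), ← Real.rpow_mul (by norm_num)]
    apply Real.rpow_le_rpow_of_exponent_ge (by norm_num) (by norm_num)
    push_cast
    have hαN : 2 < (N:ℝ)*α := by
      rw [div_lt_iff₀ hα0] at hNα; linarith
    have hNN : (0:ℝ) ≤ (N:ℝ)*(N:ℝ) := by positivity
    have hmm := mul_le_mul_of_nonneg_left hαN.le hNN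
    calc (N:ℝ)*(N:ℝ)*2 = (N:ℝ)*(N:ℝ)*2 := rfl
      _ ≤ (N:ℝ)*(N:ℝ)*((N:ℝ)*α) := hmm
      _ = (N:ℝ)*(N:ℝ)*(N:ℝ)*α := by ring
  have h5 : (0:ℝ) ≤ (ee N)^α := Real.rpow_nonneg he.le α
  have hfin : aa N ≤ C * (2 * (aa N)^2) := by
    calc aa N ≤ C * (2*(ee N * ww N))^α := hup
      _ ≤ C * ((2*ee N)^α) := mul_le_mul_of_nonneg_left h1 hCpos.le
      _ = C * (2^α * (ee N)^α) := by rw [h2]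
      _ ≤ C * (2 * (aa N)^2) :=
          mul_le_mul_of_nonneg_left (mul_le_mul h3 h4 h5 (by norm_num)) hCpos.le
  have h6 : 1 ≤ 2*C*aa N := by
    have hre : C * (2 * (aa N)^2) = (2*C*aa N) * aa N := by ring
    rw [hre] at hfin
    have h1a : 1 * aa N ≤ (2*C*aa N) * aa N := by linarith
    exact le_of_mul_le_mul_right h1a ha
  have h7 : aa N ≤ (1/2:ℝ)^N := by
    rw [aa]
    exact pow_le_pow_of_le_one (by norm_num) (by norm_num) (Nat.le_mul_of_pos_left N (by omega))
  have h8 : (1/2:ℝ)^N ≤ 1/(N:ℝ) := by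
    have hlt : ((N:ℝ)) < 2^N := by exact_mod_cast Nat.lt_two_pow_self (n := N)
    have hNpos : (0:ℝ) < N := by linarith
    have h2N : (1/2:ℝ)^N = 1/2^N := by rw [div_pow, one_pow]
    rw [h2N]
    exact one_div_le_one_div_of_le hNpos hlt.le
  have hNpos : (0:ℝ) < N := by linarith
  have h9 : 2*C*aa N ≤ 2*C*(1/(N:ℝ)) := by
    apply mul_le_mul_of_nonneg_left (le_trans h7 h8) (by linarith)
  have h10 : 2*C*(1/(N:ℝ)) < 1 := by
    rw [mul_one_div, div_lt_one hNpos]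
    linarith
  linarith
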